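/- For every k-tuple of io-sequences (σ₁, …, σ_k) and every c ∈ ℕ∞, the function F : (ℕ∞)^k → ℕ∞ defined by F(n₁, …, n_k) = min(c, ⟦σ₁⟧(n₁), …, ⟦σ_k⟧(n_k)) is monotone and continuous in each argument, and if each σ_i is eventually periodic then F restricted along the diagonal n ↦ F(n, …, n) is a periodically increasing function ℕ∞ → ℕ∞. -/

import Mathlib

open scoped Classical

def prodList : List Bool → ℕ → ℕ
  | [], _ => 0
  | true :: l, n => 1 + prodList l n
  | false :: _, 0 => 0
  | false :: l, n + 1 => prodList l n

@[simp] lemma prodList_nil (n : ℕ) : prodList [] n = 0 := rfl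
@[simp] lemma prodList_true (l : List Bool) (n : ℕ) :
    prodList (true :: l) n = 1 + prodList l n := rfl
@[simp] lemma prodList_false_zero (l : List Bool) : prodList (false :: l) 0 = 0 := rfl
@[simp] lemma prodList_false_succ (l : List Bool) (n : ℕ) :
    prodList (false :: l) (n + 1) = prodList l n := rfl

lemma prodList_mono_budget (l : List Bool) : Monotone (prodList l) := by
  induction l with
  | nil => intro a b h; simp
  | cons x l ih =>
    intro a b h
    cases x with
    | true => simpa using ih h
    | false =>
      cases a with
      | zero => simp
      | succ a =>
        cases b with
        | zero => omega
        | succ b => simpa using ih (by omega)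

lemma prodList_le_append (a b : List Bool) (n : ℕ) :
    prodList a n ≤ prodList (a ++ b) n := by
  induction a generalizing n with
  | nil => simp
  | cons x a ih =>
    cases x with
    | true => simpa using ih n
    | false =>
      cases n with
      | zero => simp
      | succ n => simpa using ih n

lemma prodList_prefix {a b : List Bool} (h : a <+: b) (n : ℕ) :
    prodList a n ≤ prodList b n := by
  obtain ⟨t, rfl⟩ := h; exact prodList_le_append a t n

lemma prodList_append_of_le (a b : List Bool) (n : ℕ) (h : a.count false ≤ n) :
    prodList (a ++ b) n = a.count true + prodList b (n - a.count false) := by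
  induction a generalizing n with
  | nil => simp
  | cons x a ih =>
    cases x with
    | true =>
      simp only [List.cons_append, prodList_true, List.count_cons] at *
      rw [ih n (by simpa using h)]
      simp; omega
    | false =>
      simp [List.count_cons] at h
      cases n with
      | zero => omega
      | succ n =>
        simp only [List.cons_append, prodList_false_succ, List.count_cons]
        rw [ih n (by omega)]
        simp

lemma prodList_append_of_lt (a b : List Bool) (n : ℕ) (h : n < a.count false) :
    prodList (a ++ b) n = prodList a n := by
  induction a generalizing n with
  | nil => simp at h
  | cons x a ih =>
    cases x with
    | true =>
      simp [List.count_cons] at h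
      simp only [List.cons_append, prodList_true]
      rw [ih n (by omega)]
    | false =>
      cases n with
      | zero => simp
      | succ n =>
        simp [List.count_cons] at h
        simpa using ih n (by omega)

lemma prodList_eq_count (l : List Bool) (n : ℕ) (h : l.count false ≤ n) :
    prodList l n = l.count true := by
  have := prodList_append_of_le l [] n h
  simpa using this

lemma count_bool (l : List Bool) : l.count true + l.count false = l.length := by
  induction l with
  | nil => simp
  | cons x l ih => cases x <;> simp [List.count_cons] <;> omega

open Stream'.Seq in
lemma seq_take_nil (n : ℕ) : (Stream'.Seq.nil : Stream'.Seq Bool).take n = [] := by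
  cases n <;> simp [Stream'.Seq.take]

open Stream'.Seq in
lemma seq_take_cons (a : Bool) (s : Stream'.Seq Bool) (n : ℕ) :
    (Stream'.Seq.cons a s).take (n + 1) = a :: s.take n := by
  simp [Stream'.Seq.take]

lemma seq_take_succ_prefix (s : Stream'.Seq Bool) (n : ℕ) :
    s.take n <+: s.take (n + 1) := by
  induction n generalizing s with
  | zero => simp [Stream'.Seq.take]
  | succ n ih =>
    apply s.recOn
    · simp [seq_take_nil]
    · intro x s'
      rw [seq_take_cons, seq_take_cons]
      exact List.cons_prefix_cons.mpr ⟨rfl, ih s'⟩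

lemma seq_take_prefix_of_le (s : Stream'.Seq Bool) {m n : ℕ} (h : m ≤ n) :
    s.take m <+: s.take n := by
  induction n with
  | zero =>
    have : m = 0 := by omega
    subst this; exact List.prefix_refl _
  | succ n ih =>
    rcases Nat.lt_or_ge m (n+1) with h' | h'
    · exact (ih (by omega)).trans (seq_take_succ_prefix s n)
    · have : m = n + 1 := by omega
      subst this; exact List.prefix_refl _

lemma seq_take_append (a : List Bool) (s : Stream'.Seq Bool) (k : ℕ) :
    ((Stream'.Seq.ofList a).append s).take (a.length + k) = a ++ s.take k := by
  induction a generalizing k with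
  | nil => simp [Stream'.Seq.ofList_nil, Stream'.Seq.nil_append]
  | cons x a ih =>
    rw [Stream'.Seq.ofList_cons, Stream'.Seq.cons_append]
    have : (x :: a).length + k = (a.length + k) + 1 := by simp; omega
    rw [this, seq_take_cons, ih]
    simp

noncomputable def prodSeq (σ : Stream'.Seq Bool) (n : ℕ∞) : ℕ∞ :=
  ⨆ (k : ℕ) (m : ℕ) (_ : (m : ℕ∞) ≤ n), (prodList (σ.take k) m : ℕ∞)

lemma prodSeq_mono (σ : Stream'.Seq Bool) : Monotone (prodSeq σ) := by
  intro a b h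
  refine iSup_le fun k => iSup_le fun m => iSup_le fun hm => ?_
  exact le_iSup_of_le k (le_iSup_of_le m (le_iSup_of_le (hm.trans h) le_rfl))

lemma prodSeq_coe (σ : Stream'.Seq Bool) (n : ℕ) :
    prodSeq σ (n : ℕ∞) = ⨆ k, (prodList (σ.take k) n : ℕ∞) := by
  apply le_antisymm
  · refine iSup_le fun k => iSup_le fun m => iSup_le fun hm => ?_
    have hmn : m ≤ n := by exact_mod_cast hm
    exact le_iSup_of_le k (by exact_mod_cast Nat.cast_le.mpr (prodList_mono_budget _ hmn))
  · refine iSup_le fun k => ?_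
    exact le_iSup_of_le k (le_iSup_of_le n (le_iSup_of_le le_rfl le_rfl))

lemma exists_le_of_coe_le_iSup {m : ℕ} {ch : ℕ → ℕ∞} (h : (m : ℕ∞) ≤ ⨆ i, ch i) :
    ∃ i, (m : ℕ∞) ≤ ch i := by
  cases m with
  | zero => exact ⟨0, by simp⟩
  | succ m =>
    have h1 : (m : ℕ∞) < ⨆ i, ch i := by
      refine lt_of_lt_of_le ?_ h
      exact_mod_cast Nat.lt_succ_self m
    rw [lt_iSup_iff] at h1
    obtain ⟨i, hi⟩ := h1
    refine ⟨i, ?_⟩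
    have : (m : ℕ∞) + 1 ≤ ch i := (ENat.add_one_le_iff (by simp)).mpr hi
    simpa [Nat.cast_succ] using this

lemma prodSeq_cont (σ : Stream'.Seq Bool) (ch : ℕ → ℕ∞) :
    prodSeq σ (⨆ i, ch i) = ⨆ i, prodSeq σ (ch i) := by
  apply le_antisymm
  · refine iSup_le fun k => iSup_le fun m => iSup_le fun hm => ?_
    obtain ⟨i, hi⟩ := exists_le_of_coe_le_iSup hm
    exact le_iSup_of_le i
      (le_iSup_of_le k (le_iSup_of_le m (le_iSup_of_le hi le_rfl)))
  · exact iSup_le fun i => prodSeq_mono σ (le_iSup ch i)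

lemma min_iSup_eq (c : ℕ∞) (f : ℕ → ℕ∞) : min c (⨆ i, f i) = ⨆ i, min c (f i) := by
  exact inf_iSup_eq c f

lemma key_cont (c : ℕ∞) (k : ℕ) (σ : Fin k → Stream'.Seq Bool)
    (g : ℕ → Fin k → ℕ∞) (hg : ∀ j, Monotone fun n => g n j) :
    min c (⨅ j, prodSeq (σ j) (⨆ n, g n j)) =
      ⨆ n, min c (⨅ j, prodSeq (σ j) (g n j)) := by
  have h1 : ∀ j, prodSeq (σ j) (⨆ n, g n j) = ⨆ n, prodSeq (σ j) (g n j) :=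
    fun j => prodSeq_cont _ _
  simp only [h1]
  rw [← Set.iSup_iInf_of_monotone (f := fun j n => prodSeq (σ j) (g n j))
      (fun j => (prodSeq_mono (σ j)).comp (hg j))]
  exact min_iSup_eq c _

lemma prodSeq_ofList (l : List Bool) (n : ℕ) :
    prodSeq (Stream'.Seq.ofList l) (n : ℕ∞) = (prodList l n : ℕ∞) := by
  rw [prodSeq_coe]
  apply le_antisymm
  · refine iSup_le fun k => ?_
    have h1 : (Stream'.Seq.ofList l).take k <+: l := by
      rcases Nat.le_total k l.length with h | h
      · have h2 := seq_take_prefix_of_le (Stream'.Seq.ofList l) h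
        have h3 : (Stream'.Seq.ofList l).take l.length = l := by
          have := seq_take_append l (Stream'.Seq.nil) 0
          simpa [Stream'.Seq.append_nil, seq_take_nil] using this
        rw [h3] at h2; exact h2
      · have h3 : (Stream'.Seq.ofList l).take k = l := by
          have := seq_take_append l (Stream'.Seq.nil) (k - l.length)
          rw [Stream'.Seq.append_nil, seq_take_nil, List.append_nil] at this
          rw [show l.length + (k - l.length) = k by omega] at this
          exact this
        rw [h3]
    exact_mod_cast Nat.cast_le.mpr (prodList_prefix h1 n)
  · refine le_iSup_of_le l.length ?_
    have h3 : (Stream'.Seq.ofList l).take l.length = l := by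
      have := seq_take_append l (Stream'.Seq.nil) 0
      simpa [Stream'.Seq.append_nil, seq_take_nil] using this
    rw [h3]

/-- `v^^j` -/
def wpow (v : List Bool) (j : ℕ) : List Bool := (List.replicate j v).flatten

@[simp] lemma wpow_zero (v : List Bool) : wpow v 0 = [] := rfl
lemma wpow_succ (v : List Bool) (j : ℕ) : wpow v (j+1) = v ++ wpow v j := by
  simp [wpow, List.replicate_succ]
lemma wpow_succ' (v : List Bool) (j : ℕ) : wpow v (j+1) = wpow v j ++ v := by
  simp [wpow, List.replicate_succ']

lemma cycle_take (v : List Bool) (hv : v ≠ []) (j : ℕ) :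
    (Stream'.Seq.ofStream (Stream'.cycle v hv)).take (j * v.length) = wpow v j := by
  induction j with
  | zero => simp [Stream'.Seq.take]
  | succ j ih =>
    have h1 : Stream'.Seq.ofStream (Stream'.cycle v hv) =
        (Stream'.Seq.ofList v).append (Stream'.Seq.ofStream (Stream'.cycle v hv)) := by
      conv_lhs => rw [Stream'.cycle_eq v hv]
      exact Stream'.Seq.ofStream_append v _
    rw [show (j+1) * v.length = v.length + j * v.length by ring]
    conv_lhs => rw [h1]
    rw [seq_take_append, ih, wpow_succ]

lemma prodSeq_cycle_rep (u v : List Bool) (hv : v ≠ []) (n : ℕ) :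
    prodSeq ((Stream'.Seq.ofList u).append (Stream'.Seq.ofStream (Stream'.cycle v hv)))
      (n : ℕ∞) = ⨆ j, (prodList (u ++ wpow v j) n : ℕ∞) := by
  set σ := (Stream'.Seq.ofList u).append (Stream'.Seq.ofStream (Stream'.cycle v hv)) with hσ
  have htake : ∀ j, σ.take (u.length + j * v.length) = u ++ wpow v j := by
    intro j; rw [hσ, seq_take_append, cycle_take]
  rw [prodSeq_coe]
  apply le_antisymm
  · refine iSup_le fun k => ?_
    have hlen : 1 ≤ v.length := by
      cases v with | nil => exact absurd rfl hv | cons a t => simp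
    have hk : k ≤ u.length + k * v.length := by
      have : k ≤ k * v.length := Nat.le_mul_of_pos_right k (by omega)
      omega
    have hpre : σ.take k <+: u ++ wpow v k := by
      rw [← htake k]; exact seq_take_prefix_of_le σ hk
    exact le_iSup_of_le k (by exact_mod_cast Nat.cast_le.mpr (prodList_prefix hpre n))
  · refine iSup_le fun j => ?_
    refine le_iSup_of_le (u.length + j * v.length) ?_
    rw [htake j]

/-- Eventually periodic monotone functions `ℕ → ℕ∞`. -/
def EP (f : ℕ → ℕ∞) : Prop :=
  Monotone f ∧ ∃ N p q : ℕ, 1 ≤ p ∧ ∀ n, N ≤ n → f (n + p) = f n + (q : ℕ∞)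

lemma EP_const (c : ℕ∞) : EP (fun _ => c) :=
  ⟨monotone_const, 0, 1, 0, le_rfl, fun n _ => by simp⟩

lemma ep_iterate {f : ℕ → ℕ∞} {N p q : ℕ}
    (h : ∀ n, N ≤ n → f (n + p) = f n + (q : ℕ∞)) :
    ∀ (m n : ℕ), N ≤ n → f (n + m * p) = f n + ((m * q : ℕ) : ℕ∞) := by
  intro m
  induction m with
  | zero => intro n hn; simp
  | succ m ih =>
    intro n hn
    have h1 : n + (m + 1) * p = (n + m * p) + p := by ring
    rw [h1, h (n + m * p) (by omega), ih n hn]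
    have : ((m + 1) * q : ℕ) = (m * q) + q := by ring
    rw [this]
    push_cast
    rw [add_assoc]

lemma min_add_add_right' (a b c : ℕ∞) : min (a + c) (b + c) = min a b + c := by
  rcases le_total a b with h | h
  · rw [min_eq_left (add_le_add h (le_refl c)), min_eq_left h]
  · rw [min_eq_right (add_le_add h (le_refl c)), min_eq_right h]

/-- If `f ≤ g` eventually, the min is eventually periodic with `f`'s data. -/
lemma ep_min_of_eventually_le {f g : ℕ → ℕ∞}
    (hf : Monotone f) (hg : Monotone g)
    (hper : ∃ N p q : ℕ, 1 ≤ p ∧ ∀ n, N ≤ n → f (n + p) = f n + (q : ℕ∞))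
    (M : ℕ) (hle : ∀ n, M ≤ n → f n ≤ g n) :
    EP (fun n => min (f n) (g n)) := by
  obtain ⟨N, p, q, hp, h⟩ := hper
  refine ⟨hf.min hg, max N M, p, q, hp, fun n hn => ?_⟩
  have h1 : min (f (n + p)) (g (n + p)) = f (n + p) :=
    min_eq_left (hle _ (by omega))
  have h2 : min (f n) (g n) = f n := min_eq_left (hle _ (by omega))
  simp only [h1, h2]
  exact h n (by omega)

/-- Slope-comparison domination. -/
lemma ep_slope_dom {f g : ℕ → ℕ∞} {N P Q₁ Q₂ : ℕ}
    (hf : Monotone f)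
    (hF : ∀ n, N ≤ n → f (n + P) = f n + (Q₁ : ℕ∞))
    (hG : ∀ n, N ≤ n → g (n + P) = g n + (Q₂ : ℕ∞))
    (hfin : f (N + P) ≠ ⊤) (hQ : Q₁ < Q₂) (hP : 1 ≤ P) :
    ∃ M, ∀ n, M ≤ n → f n ≤ g n := by
  set B := (f (N + P)).toNat with hB
  refine ⟨N + B * P, fun n hn => ?_⟩
  set m := (n - N) / P with hm
  set r := N + (n - N) % P with hr
  have hdm := Nat.div_add_mod (n - N) P
  rw [Nat.mul_comm] at hdm
  have hneq : n = r + m * P := by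
    rw [hr, hm]; omega
  have hrN : N ≤ r := by omega
  have hrP : r ≤ N + P := by
    have := Nat.mod_lt (n - N) (by omega : 0 < P)
    omega
  have hmB : B ≤ m := by
    have h1 : B * P ≤ n - N := by omega
    rw [hm]
    exact (Nat.le_div_iff_mul_le (by omega)).mpr h1
  have hfn : f n = f r + ((m * Q₁ : ℕ) : ℕ∞) := by
    rw [hneq]; exact ep_iterate hF m r hrN
  have hgn : g n = g r + ((m * Q₂ : ℕ) : ℕ∞) := by
    rw [hneq]; exact ep_iterate hG m r hrN
  have hfr : f r ≤ (B : ℕ∞) := by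
    rw [hB, ENat.coe_toNat hfin]
    exact hf hrP
  have hnat : B + m * Q₁ ≤ m * Q₂ := by
    have h1 : m * (Q₁ + 1) ≤ m * Q₂ := Nat.mul_le_mul_left m (by omega)
    have h2 : m * (Q₁ + 1) = m * Q₁ + m := by ring
    omega
  calc f n = f r + ((m * Q₁ : ℕ) : ℕ∞) := hfn
    _ ≤ (B : ℕ∞) + ((m * Q₁ : ℕ) : ℕ∞) := add_le_add hfr le_rfl
    _ = ((B + m * Q₁ : ℕ) : ℕ∞) := by push_cast; ring
    _ ≤ ((m * Q₂ : ℕ) : ℕ∞) := by exact_mod_cast hnat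
    _ ≤ g r + ((m * Q₂ : ℕ) : ℕ∞) := le_add_self
    _ = g n := hgn.symm

lemma EP.min {f g : ℕ → ℕ∞} (hf : EP f) (hg : EP g) :
    EP (fun n => min (f n) (g n)) := by
  obtain ⟨mf, N₁, p₁, q₁, hp₁, h₁⟩ := hf
  obtain ⟨mg, N₂, p₂, q₂, hp₂, h₂⟩ := hg
  set N := max N₁ N₂ with hN
  set P := p₁ * p₂ with hP
  set Q₁ := p₂ * q₁ with hQ₁
  set Q₂ := p₁ * q₂ with hQ₂
  have hPpos : 1 ≤ P := by
    rw [hP]; exact Nat.one_le_iff_ne_zero.mpr (by positivity)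
  have hF : ∀ n, N ≤ n → f (n + P) = f n + (Q₁ : ℕ∞) := by
    intro n hn
    have := ep_iterate h₁ p₂ n (by omega)
    rwa [show p₂ * p₁ = P by rw [hP]; ring] at this
  have hG : ∀ n, N ≤ n → g (n + P) = g n + (Q₂ : ℕ∞) := by
    intro n hn
    have := ep_iterate h₂ p₁ n (by omega)
    rwa [show p₁ * p₂ = P by rw [hP]] at this
  by_cases hft : f (N + P) = ⊤
  · -- f is eventually ⊤, so min = g eventually
    have hgle : ∀ n, N + P ≤ n → g n ≤ f n := fun n hn => by
      have : f n = ⊤ := top_le_iff.mp (hft ▸ mf hn)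
      rw [this]; exact le_top
    have := ep_min_of_eventually_le mg mf ⟨N₂, p₂, q₂, hp₂, h₂⟩ (N + P) hgle
    simpa [min_comm] using this
  by_cases hgt : g (N + P) = ⊤
  · have hfle : ∀ n, N + P ≤ n → f n ≤ g n := fun n hn => by
      have : g n = ⊤ := top_le_iff.mp (hgt ▸ mg hn)
      rw [this]; exact le_top
    exact ep_min_of_eventually_le mf mg ⟨N₁, p₁, q₁, hp₁, h₁⟩ (N + P) hfle
  rcases lt_trichotomy Q₁ Q₂ with hQ | hQ | hQ
  · obtain ⟨M, hM⟩ := ep_slope_dom mf hF hG hft hQ hPpos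
    exact ep_min_of_eventually_le mf mg ⟨N, P, Q₁, hPpos, hF⟩ M hM
  · refine ⟨mf.min mg, N, P, Q₁, hPpos, fun n hn => ?_⟩
    have := hG n hn
    rw [← hQ] at this
    simp only [hF n hn, this]
    exact min_add_add_right' _ _ _
  · obtain ⟨M, hM⟩ := ep_slope_dom mg hG hF hgt hQ hPpos
    have := ep_min_of_eventually_le mg mf ⟨N, P, Q₂, hPpos, hG⟩ M hM
    simpa [min_comm] using this

lemma wpow_count (v : List Bool) (b : Bool) (j : ℕ) :
    (wpow v j).count b = j * v.count b := by
  induction j with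
  | zero => simp
  | succ j ih => rw [wpow_succ, List.count_append, ih]; ring

def RationalSeq (σ : Stream'.Seq Bool) : Prop :=
  (∃ l : List Bool, σ = Stream'.Seq.ofList l) ∨
  ∃ (u v : List Bool) (h : v ≠ []),
    σ = (Stream'.Seq.ofList u).append (Stream'.Seq.ofStream (Stream'.cycle v h))

lemma EP_prodSeq {σ : Stream'.Seq Bool} (h : RationalSeq σ) :
    EP (fun n : ℕ => prodSeq σ (n : ℕ∞)) := by
  have hmono : Monotone (fun n : ℕ => prodSeq σ (n : ℕ∞)) :=
    (prodSeq_mono σ).comp (fun a b hab => Nat.mono_cast hab)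
  rcases h with ⟨l, rfl⟩ | ⟨u, v, hv, rfl⟩
  · refine ⟨hmono, l.count false, 1, 0, le_rfl, fun n hn => ?_⟩
    dsimp only
    rw [prodSeq_ofList, prodSeq_ofList,
      prodList_eq_count l (n+1) (by omega), prodList_eq_count l n hn]
    simp
  · set F := u.count false with hF
    set T := u.count true with hT
    set d := v.count false with hd
    set t := v.count true with ht
    by_cases hd0 : d = 0
    · -- no inputs in the cycle: production is ⊤ from F on
      have htop : ∀ n : ℕ, F ≤ n → prodSeq ((Stream'.Seq.ofList u).append
          (Stream'.Seq.ofStream (Stream'.cycle v hv))) (n : ℕ∞) = ⊤ := by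
        intro n hn
        rw [prodSeq_cycle_rep]
        rw [iSup_eq_top]
        intro b hb
        lift b to ℕ using hb.ne
        refine ⟨b + 1, ?_⟩
        have hval : prodList (u ++ wpow v (b+1)) n = T + (b+1) * t := by
          rw [prodList_append_of_le u _ n hn,
            prodList_eq_count _ _ (by simp [wpow_count, ← hd, hd0]), wpow_count]
        have htpos : 1 ≤ t := by
          have := count_bool v
          have hlen : 1 ≤ v.length := by
            cases v with | nil => exact absurd rfl hv | cons a s => simp
          omega
        rw [hval]
        exact_mod_cast Nat.lt_of_lt_of_le (Nat.lt_succ_self b)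
          (by nlinarith : b + 1 ≤ T + (b+1) * t)
      refine ⟨hmono, F, 1, 0, le_rfl, fun n hn => ?_⟩
      dsimp only
      rw [htop (n+1) (by omega), htop n hn]
      simp
    · -- d ≥ 1 inputs per cycle, production grows by t per d
      refine ⟨hmono, F, d, t, by omega, fun n hn => ?_⟩
      dsimp only
      rw [prodSeq_cycle_rep, prodSeq_cycle_rep]
      have hshift : (⨆ j, (prodList (u ++ wpow v j) (n + d) : ℕ∞)) =
          ⨆ j, (prodList (u ++ wpow v (j+1)) (n + d) : ℕ∞) := by
        apply le_antisymm
        · refine iSup_le fun j => le_iSup_of_le j ?_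
          have : u ++ wpow v j <+: u ++ wpow v (j+1) := by
            rw [wpow_succ', ← List.append_assoc]
            exact ⟨v, rfl⟩
          exact_mod_cast Nat.cast_le.mpr (prodList_prefix this _)
        · exact iSup_le fun j => le_iSup_of_le (j+1) le_rfl
      rw [hshift]
      have hval : ∀ j, prodList (u ++ wpow v (j+1)) (n + d) =
          prodList (u ++ wpow v j) n + t := by
        intro j
        rw [wpow_succ]
        rw [show u ++ (v ++ wpow v j) = (u ++ v) ++ wpow v j by simp]
        rw [prodList_append_of_le (u ++ v) _ (n + d)
          (by rw [List.count_append]; omega)]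
        rw [prodList_append_of_le u _ n hn]
        rw [List.count_append, List.count_append]
        rw [show n + d - (F + d) = n - F by omega]
        ring
      calc (⨆ j, (prodList (u ++ wpow v (j+1)) (n + d) : ℕ∞))
          = ⨆ j, ((prodList (u ++ wpow v j) n : ℕ∞) + (t : ℕ∞)) := by
            congr 1; funext j; rw [hval j]; push_cast; ring
        _ = (⨆ j, (prodList (u ++ wpow v j) n : ℕ∞)) + (t : ℕ∞) := by
            rw [ENat.iSup_add]

def NEContinuous (f : ℕ∞ → ℕ∞) : Prop :=
  Monotone f ∧ ∀ c : ℕ → ℕ∞, Monotone c → f (⨆ k, c k) = ⨆ k, f (c k)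

def PerInc (f : ℕ∞ → ℕ∞) : Prop :=
  Monotone f ∧
  (∀ c : ℕ → ℕ∞, Monotone c → f (⨆ k, c k) = ⨆ k, f (c k)) ∧
  (f ⊤ = ⨆ n : ℕ, f n) ∧
  ∃ N p q : ℕ, 1 ≤ p ∧ ∀ n : ℕ, N ≤ n → f ((n : ℕ∞) + (p : ℕ∞)) = f n + (q : ℕ∞)

lemma fin_iInf_succ {k : ℕ} (f : Fin (k + 1) → ℕ∞) :
    ⨅ i, f i = min (f 0) (⨅ i : Fin k, f i.succ) := by
  apply le_antisymm
  · exact le_min (iInf_le _ 0) (le_iInf fun i => iInf_le _ i.succ)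
  · refine le_iInf fun i => ?_
    induction i using Fin.cases with
    | zero => exact min_le_left _ _
    | succ i => exact (min_le_right _ _).trans (iInf_le _ i)

lemma EP_min_inf (c : ℕ∞) (k : ℕ) (P : Fin k → ℕ → ℕ∞) (hP : ∀ i, EP (P i)) :
    EP (fun n => min c (⨅ i, P i n)) := by
  induction k with
  | zero =>
    have : (fun n => min c (⨅ i : Fin 0, P i n)) = fun _ => c := by
      funext n; simp
    rw [this]; exact EP_const c
  | succ k ih =>
    have heq : (fun n => min c (⨅ i : Fin (k+1), P i n)) =
        fun n => min (P 0 n) (min c (⨅ i : Fin k, P i.succ n)) := by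
      funext n
      rw [fin_iInf_succ (fun i => P i n)]
      rw [min_left_comm]
    rw [heq]
    exact EP.min (hP 0) (ih (fun i => P i.succ) (fun i => hP i.succ))

/-- The production function of a gate (c; σ₁,…,σ_k) is monotone, continuous in
each argument, and periodically increasing along the diagonal when each σᵢ is
rational. -/
theorem gate_production_monotone_continuous (k : ℕ)
    (σ : Fin k → Stream'.Seq Bool) (c : ℕ∞) :
    Monotone (fun ns : Fin k → ℕ∞ => min c (⨅ i, prodSeq (σ i) (ns i))) ∧
    (∀ (i : Fin k) (x : Fin k → ℕ∞) (ch : ℕ → ℕ∞), Monotone ch →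
      min c (⨅ j, prodSeq (σ j) (Function.update x i (⨆ n, ch n) j)) =
        ⨆ n, min c (⨅ j, prodSeq (σ j) (Function.update x i (ch n) j))) ∧
    ((∀ i, RationalSeq (σ i)) →
      PerInc (fun n : ℕ∞ => min c (⨅ i, prodSeq (σ i) n))) := by
  refine ⟨?_, ?_, ?_⟩
  · intro a b hab
    exact min_le_min le_rfl (iInf_mono fun i => prodSeq_mono _ (hab i))
  · intro i x ch hch
    have hup : ∀ j, Function.update x i (⨆ n, ch n) j =
        ⨆ n, Function.update x i (ch n) j := by
      intro j
      rcases eq_or_ne j i with rfl | hne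
      · simp
      · simp [Function.update_of_ne hne]
    simp only [hup]
    exact key_cont c k σ (fun n j => Function.update x i (ch n) j)
      (fun j => by
        rcases eq_or_ne j i with rfl | hne
        · intro a b hab; simp only [Function.update_self]; exact hch hab
        · intro a b hab; simp [Function.update_of_ne hne])
  · intro hrat
    have hmono : Monotone (fun n : ℕ∞ => min c (⨅ i, prodSeq (σ i) n)) := by
      intro a b hab
      exact min_le_min le_rfl (iInf_mono fun i => prodSeq_mono _ hab)
    have hcont : ∀ ch : ℕ → ℕ∞, Monotone ch →
        min c (⨅ i, prodSeq (σ i) (⨆ n, ch n)) =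
          ⨆ n, min c (⨅ i, prodSeq (σ i) (ch n)) := by
      intro ch hch
      exact key_cont c k σ (fun n _ => ch n) (fun _ => hch)
    refine ⟨hmono, fun ch hch => hcont ch hch, ?_, ?_⟩
    · have := hcont (fun n : ℕ => (n : ℕ∞)) (fun a b hab => Nat.mono_cast hab)
      rw [ENat.iSup_natCast] at this
      exact this
    · obtain ⟨mEP, N, p, q, hp, hper⟩ :=
        EP_min_inf c k (fun i n => prodSeq (σ i) (n : ℕ∞))
          (fun i => EP_prodSeq (hrat i))
      refine ⟨N, p, q, hp, fun n hn => ?_⟩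
      have := hper n hn
      simp only at this
      rw [show ((n : ℕ∞) + (p : ℕ∞)) = (((n + p : ℕ)) : ℕ∞) by push_cast; ring]
      exact this
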